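/- arXiv:2507.13316 — 3 statements merged into one kernel-verified Lean document; each statement's English description precedes it below -/
import Mathlib

section
/- Let a : [0,1] → [0,1] be continuous with a(s) ≥ c√(1-s²) for some c > 0 (in particular a(1) = 0 with square-root decay). Then every function u in the weighted space H^a_0 = {u ∈ L²(0,1) : a²u' ∈ L²(0,1), u(0) = 0} satisfies the weighted Poincaré inequality ‖u‖_{L²(0,1)} ≤ C ‖a²u'‖_{L²(0,1)} for a constant C depending only on c. -/
open MeasureTheory Real

set_option maxHeartbeats 1000000 in
/-- Weighted Poincaré (Hardy-type) inequality: if `a : [0,1] → [0,1]` is continuous with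
`a(s) ≥ c√(1-s²)`, then every `u` with `u(0) = 0`, `u ∈ L²(0,1)` and `a²u' ∈ L²(0,1)`
satisfies `‖u‖_{L²}² ≤ C ‖a²u'‖_{L²}²` with `C` depending only on `c`. -/
theorem stmt_3 (c : ℝ) (hc : 0 < c) :
    ∃ C > 0, ∀ (a u u' : ℝ → ℝ),
      ContinuousOn a (Set.Icc 0 1) →
      (∀ s ∈ Set.Icc (0:ℝ) 1, a s ∈ Set.Icc (0:ℝ) 1) →
      (∀ s ∈ Set.Icc (0:ℝ) 1, c * Real.sqrt (1 - s ^ 2) ≤ a s) →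
      ContinuousOn u (Set.Ico 0 1) →
      (∀ s ∈ Set.Ioo (0:ℝ) 1, HasDerivAt u (u' s) s) →
      u 0 = 0 →
      IntegrableOn (fun s => (u s) ^ 2) (Set.Ioo 0 1) →
      IntegrableOn (fun s => ((a s) ^ 2 * u' s) ^ 2) (Set.Ioo 0 1) →
      ∫ s in Set.Ioo (0:ℝ) 1, (u s) ^ 2 ≤
        C * ∫ s in Set.Ioo (0:ℝ) 1, ((a s) ^ 2 * u' s) ^ 2 := by
  refine ⟨4 / c ^ 4, by positivity, ?_⟩
  intro a u u' ha_cont ha_mem ha_lb hu_cont hu_deriv hu0 hX hA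
  set f : ℝ → ℝ := fun s => ((a s) ^ 2 * u' s) ^ 2 with hf
  set w : ℝ → ℝ := fun s => (1 - s) * u' s with hw
  set X : ℝ := ∫ s in Set.Ioo (0:ℝ) 1, (u s) ^ 2 with hXdef
  set Y : ℝ := ∫ s in Set.Ioo (0:ℝ) 1, (w s) ^ 2 with hYdef
  -- lower bound for a^2
  have ha_sq : ∀ s ∈ Set.Icc (0:ℝ) 1, c ^ 2 * (1 - s ^ 2) ≤ (a s) ^ 2 := by
    intro s hs
    have h1 : (0:ℝ) ≤ 1 - s ^ 2 := by nlinarith [hs.1, hs.2]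
    have h2 : c * Real.sqrt (1 - s ^ 2) ≤ a s := ha_lb s hs
    have h3 : (0:ℝ) ≤ c * Real.sqrt (1 - s ^ 2) := by positivity
    have h4 := Real.sq_sqrt h1
    nlinarith [Real.sqrt_nonneg (1 - s ^ 2)]
  -- measurability of u' on Ioo 0 1
  have hu'_meas : AEStronglyMeasurable u' (volume.restrict (Set.Ioo (0:ℝ) 1)) := by
    have : ∀ s ∈ Set.Ioo (0:ℝ) 1, deriv u s = u' s := fun s hs => (hu_deriv s hs).deriv
    exact (measurable_deriv u).aestronglyMeasurable.congr
      ((ae_restrict_iff' measurableSet_Ioo).2 (Filter.Eventually.of_forall this))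
  have hu_meas : AEStronglyMeasurable u (volume.restrict (Set.Ioo (0:ℝ) 1)) :=
    (hu_cont.mono Set.Ioo_subset_Ico_self).aestronglyMeasurable measurableSet_Ioo
  -- pointwise bound (w s)^2 ≤ f s / c^4 on Ioo 0 1
  have hwf : ∀ s ∈ Set.Ioo (0:ℝ) 1, (w s) ^ 2 ≤ (1 / c ^ 4) * f s := by
    intro s hs
    have hs' : s ∈ Set.Icc (0:ℝ) 1 := Set.Ioo_subset_Icc_self hs
    have h1 : c ^ 2 * (1 - s) ≤ (a s) ^ 2 := by
      have := ha_sq s hs'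
      nlinarith [hs.1.le, hs'.2, sq_nonneg c]
    have h2 : (c ^ 2 * (1 - s) * |u' s|) ^ 2 ≤ ((a s) ^ 2 * |u' s|) ^ 2 := by
      have h3 : (0:ℝ) ≤ c ^ 2 * (1 - s) := by nlinarith [hs'.2]
      have := mul_le_mul_of_nonneg_right h1 (abs_nonneg (u' s))
      nlinarith [abs_nonneg (u' s), mul_nonneg h3 (abs_nonneg (u' s))]
    have hc4 : (0:ℝ) < c ^ 4 := by positivity
    simp only [hw, hf]
    rw [div_mul_eq_mul_div, one_mul, le_div_iff₀ hc4]
    calc ((1 - s) * u' s) ^ 2 * c ^ 4 = (c ^ 2 * (1 - s) * |u' s|) ^ 2 := by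
          rw [mul_pow, mul_pow, mul_pow, sq_abs]; ring
      _ ≤ ((a s) ^ 2 * |u' s|) ^ 2 := h2
      _ = ((a s) ^ 2 * u' s) ^ 2 := by rw [mul_pow, mul_pow, sq_abs]
  -- integrability of w^2
  have hw_meas : AEStronglyMeasurable (fun s => (w s) ^ 2)
      (volume.restrict (Set.Ioo (0:ℝ) 1)) := by
    apply AEStronglyMeasurable.pow
    exact (aestronglyMeasurable_const.sub aestronglyMeasurable_id).mul hu'_meas
  have hYint : IntegrableOn (fun s => (w s) ^ 2) (Set.Ioo (0:ℝ) 1) := by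
    apply Integrable.mono' ((hA.const_mul (1 / c ^ 4))) hw_meas
    refine (ae_restrict_iff' measurableSet_Ioo).2 (Filter.Eventually.of_forall ?_)
    intro s hs
    rw [Real.norm_eq_abs, abs_of_nonneg (sq_nonneg _)]
    exact hwf s hs
  have hY_le : Y ≤ (1 / c ^ 4) * ∫ s in Set.Ioo (0:ℝ) 1, f s := by
    rw [hYdef, ← integral_const_mul]
    exact setIntegral_mono_on hYint (hA.const_mul _) measurableSet_Ioo hwf
  -- main partial estimate
  have key : ∀ b ∈ Set.Ioo (0:ℝ) 1,
      ∫ x in Set.Ioo (0:ℝ) b, (u x) ^ 2 ≤ X / 2 + 2 * Y := by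
    intro b hb
    obtain ⟨hb0, hb1⟩ := hb
    have hIccIco : Set.Icc (0:ℝ) b ⊆ Set.Ico 0 1 :=
      fun x hx => ⟨hx.1, lt_of_le_of_lt hx.2 hb1⟩
    have hIocIoo : Set.Ioc (0:ℝ) b ⊆ Set.Ioo 0 1 :=
      fun x hx => ⟨hx.1, lt_of_le_of_lt hx.2 hb1⟩
    have huIcc : Set.uIcc (0:ℝ) b = Set.Icc 0 b := Set.uIcc_of_le hb0.le
    have h_cont_u : ContinuousOn u (Set.Icc 0 b) := hu_cont.mono hIccIco
    obtain ⟨M, hM⟩ := (isCompact_Icc : IsCompact (Set.Icc (0:ℝ) b)).exists_bound_of_continuousOn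
      h_cont_u
    have hM0 : 0 ≤ M := le_trans (norm_nonneg _) (hM 0 ⟨le_refl 0, hb0.le⟩)
    have hu'_measb : AEStronglyMeasurable u' (volume.restrict (Set.Ioc (0:ℝ) b)) :=
      hu'_meas.mono_measure (Measure.restrict_mono hIocIoo le_rfl)
    have hu_measb : AEStronglyMeasurable u (volume.restrict (Set.Ioc (0:ℝ) b)) :=
      hu_meas.mono_measure (Measure.restrict_mono hIocIoo le_rfl)
    have hd : (0:ℝ) < c ^ 2 * (1 - b ^ 2) := by
      have h1 : (0:ℝ) < 1 - b ^ 2 := by nlinarith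
      exact mul_pos (pow_pos hc 2) h1
    -- u' is integrable on (0, b]
    have hu'_int : IntegrableOn u' (Set.Ioc (0:ℝ) b) := by
      apply Integrable.mono'
        (g := fun s => (1 + f s) / (2 * (c ^ 2 * (1 - b ^ 2))))
        (((integrableOn_const measure_Ioc_lt_top.ne).add
          (hA.mono_set hIocIoo)).div_const _) hu'_measb
      refine (ae_restrict_iff' measurableSet_Ioc).2 (Filter.Eventually.of_forall ?_)
      intro s hs
      have hs' : s ∈ Set.Icc (0:ℝ) 1 := ⟨hs.1.le, (hs.2.trans_lt hb1).le⟩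
      have hA1 : c ^ 2 * (1 - b ^ 2) ≤ (a s) ^ 2 := by
        have h6 := ha_sq s hs'
        have hsb : s ^ 2 ≤ b ^ 2 := by nlinarith [hs.1, hs.2]
        nlinarith [mul_le_mul_of_nonneg_left hsb (sq_nonneg c)]
      rw [Real.norm_eq_abs, le_div_iff₀ (by positivity)]
      have h5 : (a s ^ 2 * u' s) ^ 2 = (a s ^ 2 * |u' s|) ^ 2 := by
        rw [mul_pow, mul_pow, sq_abs]
      simp only [hf]
      nlinarith [sq_nonneg (a s ^ 2 * |u' s| - 1), abs_nonneg (u' s),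
        mul_le_mul_of_nonneg_right hA1 (abs_nonneg (u' s))]
    -- derivative of F
    have hFderiv : ∀ x ∈ Set.Ioo (0:ℝ) b,
        HasDerivAt (fun y => (1 - y) * (u y) ^ 2)
          (-((u x) ^ 2) + (1 - x) * (2 * u x * u' x)) x := by
      intro x hx
      have hx1 : x ∈ Set.Ioo (0:ℝ) 1 := ⟨hx.1, hx.2.trans hb1⟩
      have h2 : HasDerivAt (fun y => (u y) ^ 2) (2 * u x * u' x) x := by
        have := (hu_deriv x hx1).fun_pow 2
        simpa [mul_comm] using this
      have h1 : HasDerivAt (fun y : ℝ => 1 - y) (-1) x := (hasDerivAt_id x).const_sub 1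
      have : HasDerivAt (fun y => (1 - y) * (u y) ^ 2)
          (-1 * u x ^ 2 + (1 - x) * (2 * u x * u' x)) x := h1.fun_mul h2
      convert this using 1
      ring
    have hFcont : ContinuousOn (fun y => (1 - y) * (u y) ^ 2) (Set.Icc 0 b) :=
      ((continuousOn_const.sub continuousOn_id).mul (h_cont_u.pow 2))
    have hi1 : IntervalIntegrable (fun x => (u x) ^ 2) volume 0 b := by
      apply ContinuousOn.intervalIntegrable
      rw [huIcc]
      exact h_cont_u.pow 2
    have hi2 : IntervalIntegrable (fun x => (1 - x) * (2 * u x * u' x)) volume 0 b := by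
      rw [intervalIntegrable_iff_integrableOn_Ioc_of_le hb0.le]
      apply Integrable.mono' ((hu'_int.abs).const_mul (2 * M))
      · exact (aestronglyMeasurable_const.sub aestronglyMeasurable_id).mul
          ((aestronglyMeasurable_const.mul hu_measb).mul hu'_measb)
      refine (ae_restrict_iff' measurableSet_Ioc).2 (Filter.Eventually.of_forall ?_)
      intro s hs
      have h1 : |1 - s| ≤ 1 := by
        rw [abs_le]; constructor <;> nlinarith [hs.1, hs.2, hb1]
      have h2 : |u s| ≤ M := by
        have := hM s ⟨hs.1.le, hs.2⟩; rwa [Real.norm_eq_abs] at this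
      have e : ‖(1 - s) * (2 * u s * u' s)‖ = |1 - s| * (2 * |u s| * |u' s|) := by
        rw [Real.norm_eq_abs, abs_mul, abs_mul, abs_mul, abs_two]
      rw [e]
      calc |1 - s| * (2 * |u s| * |u' s|) ≤ 1 * (2 * M * |u' s|) := by
            apply mul_le_mul h1 ?_ (by positivity) zero_le_one
            nlinarith [mul_le_mul_of_nonneg_right h2 (abs_nonneg (u' s))]
        _ = 2 * M * |u' s| := one_mul _
    -- FTC
    have hFTC := intervalIntegral.integral_eq_sub_of_hasDerivAt_of_le hb0.le hFcont hFderiv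
      (hi1.neg.add hi2)
    have hcongr : ∫ y in (0:ℝ)..b, (-((u y) ^ 2) + (1 - y) * (2 * u y * u' y)) =
        ∫ y in (0:ℝ)..b, ((1 - y) * (2 * u y * u' y) - (u y) ^ 2) :=
      intervalIntegral.integral_congr (fun y _ => by ring)
    rw [hcongr, intervalIntegral.integral_sub hi2 hi1] at hFTC
    have hub : (0:ℝ) ≤ (1 - b) * (u b) ^ 2 := by nlinarith [sq_nonneg (u b)]
    have hstep1 : ∫ x in (0:ℝ)..b, (u x) ^ 2 ≤
        ∫ x in (0:ℝ)..b, (1 - x) * (2 * u x * u' x) := by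
      rw [hu0] at hFTC
      simp only [ne_eq, sub_zero, mul_zero, zero_pow, one_mul] at hFTC
      nlinarith [hFTC]
    -- Cauchy–Schwarz (AM–GM) pointwise bound
    have hw2intb : IntervalIntegrable (fun x => (w x) ^ 2) volume 0 b := by
      rw [intervalIntegrable_iff_integrableOn_Ioc_of_le hb0.le]
      exact hYint.mono_set hIocIoo
    have hiRHS : IntervalIntegrable (fun x => (u x) ^ 2 / 2 + 2 * (w x) ^ 2) volume 0 b :=
      (hi1.div_const 2).add (hw2intb.const_mul 2)
    have hstep2 : ∫ x in (0:ℝ)..b, (1 - x) * (2 * u x * u' x) ≤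
        ∫ x in (0:ℝ)..b, ((u x) ^ 2 / 2 + 2 * (w x) ^ 2) := by
      apply intervalIntegral.integral_mono_on hb0.le hi2 hiRHS
      intro x _
      have : (1 - x) * (2 * u x * u' x) = 2 * u x * w x := by simp only [hw]; ring
      rw [this]
      nlinarith [sq_nonneg (u x - 2 * w x)]
    -- extend to (0,1)
    have hint2 : IntegrableOn (fun x => (u x) ^ 2 / 2 + 2 * (w x) ^ 2) (Set.Ioo (0:ℝ) 1) :=
      (hX.div_const 2).add (hYint.const_mul 2)
    have hstep3 : ∫ x in (0:ℝ)..b, ((u x) ^ 2 / 2 + 2 * (w x) ^ 2) ≤ X / 2 + 2 * Y := by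
      rw [intervalIntegral.integral_of_le hb0.le]
      have hmono : ∫ x in Set.Ioc (0:ℝ) b, ((u x) ^ 2 / 2 + 2 * (w x) ^ 2) ≤
          ∫ x in Set.Ioo (0:ℝ) 1, ((u x) ^ 2 / 2 + 2 * (w x) ^ 2) := by
        apply setIntegral_mono_set hint2
        · exact Filter.Eventually.of_forall fun x => by positivity
        · exact HasSubset.Subset.eventuallyLE hIocIoo
      have heq : ∫ x in Set.Ioo (0:ℝ) 1, ((u x) ^ 2 / 2 + 2 * (w x) ^ 2) = X / 2 + 2 * Y := by
        rw [integral_add (hX.div_const 2) (hYint.const_mul 2), integral_div, integral_const_mul]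
      linarith
    have hIooIoc : ∫ x in Set.Ioo (0:ℝ) b, (u x) ^ 2 = ∫ x in (0:ℝ)..b, (u x) ^ 2 := by
      rw [intervalIntegral.integral_of_le hb0.le, integral_Ioc_eq_integral_Ioo]
    linarith
  -- limiting argument
  have hXle : X ≤ X / 2 + 2 * Y := by
    set S : ℕ → Set ℝ := fun n => Set.Ioo (0:ℝ) (1 - 1 / (n + 2)) with hS
    have hSmeas : ∀ n, MeasurableSet (S n) := fun n => measurableSet_Ioo
    have hSmono : Monotone S := by
      intro m n hmn
      apply Set.Ioo_subset_Ioo le_rfl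
      have h1 : (0:ℝ) < (m:ℝ) + 2 := by positivity
      have h2 : (m:ℝ) + 2 ≤ (n:ℝ) + 2 := by exact_mod_cast by simpa using hmn
      have := one_div_le_one_div_of_le h1 h2
      linarith
    have hSmem : ∀ n : ℕ, (1 - 1 / ((n:ℝ) + 2)) ∈ Set.Ioo (0:ℝ) 1 := by
      intro n
      have h1 : (0:ℝ) < (n:ℝ) + 2 := by positivity
      have h2 : 1 / ((n:ℝ) + 2) ≤ 1 / 2 := by
        apply one_div_le_one_div_of_le <;> [norm_num; skip]
        have : (0:ℝ) ≤ (n:ℝ) := Nat.cast_nonneg n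
        linarith
      have h3 : (0:ℝ) < 1 / ((n:ℝ) + 2) := by positivity
      constructor <;> [linarith; linarith]
    have hSunion : (⋃ n, S n) = Set.Ioo (0:ℝ) 1 := by
      ext x
      simp only [hS, Set.mem_iUnion, Set.mem_Ioo]
      constructor
      · rintro ⟨n, h1, h2⟩
        exact ⟨h1, h2.trans_le (by linarith [(hSmem n).2])⟩
      · rintro ⟨h1, h2⟩
        obtain ⟨n, hn⟩ := exists_nat_one_div_lt (sub_pos.2 h2)
        refine ⟨n, h1, ?_⟩
        have h3 : (0:ℝ) < (n:ℝ) + 1 := by positivity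
        have h4 : ((n:ℝ) + 1) ≤ (n:ℝ) + 2 := by linarith
        have := one_div_le_one_div_of_le h3 h4
        linarith
    have htend := tendsto_setIntegral_of_monotone hSmeas hSmono (by rw [hSunion]; exact hX)
    rw [hSunion] at htend
    apply le_of_tendsto htend
    apply Filter.Eventually.of_forall
    intro n
    exact key _ (hSmem n)
  have hfnonneg : 0 ≤ ∫ s in Set.Ioo (0:ℝ) 1, f s :=
    setIntegral_nonneg measurableSet_Ioo (fun s _ => sq_nonneg _)
  have : X ≤ 4 * Y := by linarith
  calc X ≤ 4 * Y := this
    _ ≤ 4 * ((1 / c ^ 4) * ∫ s in Set.Ioo (0:ℝ) 1, f s) := by linarith [hY_le]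
    _ = 4 / c ^ 4 * ∫ s in Set.Ioo (0:ℝ) 1, f s := by ring
end

section
/- Let a : [0,1] → [0,∞) be continuous with a > 0 on [0,1), let α(s) = c·a(s) for some constant c > 0, and let f ∈ L^∞(0,1). If v ∈ H^a_0 is the weak solution (energy minimizer) of (a⁴v')' - α v = α f with v(0) = 0 and natural (no-flux) condition at s = 1, then ‖v‖_{L^∞(0,1)} ≤ 2‖f‖_{L^∞(0,1)}. -/
open MeasureTheory Real

/-- Membership in the weighted space `H^a_0(0,1)`: `w` is continuous up to `s = 0`,
weakly differentiable on `(0,1)` with derivative `w'`, `w ∈ L²`, `a²w' ∈ L²`, `w(0) = 0`. -/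
def MemHa (a w w' : ℝ → ℝ) : Prop :=
  ContinuousOn w (Set.Ico 0 1) ∧
  (∀ s ∈ Set.Ioo (0:ℝ) 1, HasDerivAt w (w' s) s) ∧
  IntegrableOn (fun s => (w s) ^ 2) (Set.Ioo 0 1) ∧
  IntegrableOn (fun s => ((a s) ^ 2 * w' s) ^ 2) (Set.Ioo 0 1) ∧
  w 0 = 0

/-- The energy `E[w] = (1/2)∫₀¹ (a⁴(w')² + α w²) - ∫₀¹ α f w` with `α = c·a`. -/
noncomputable def energyE (a : ℝ → ℝ) (c : ℝ) (f w w' : ℝ → ℝ) : ℝ :=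
  (1 / 2) * ∫ s in Set.Ioo (0:ℝ) 1,
      ((a s) ^ 4 * (w' s) ^ 2 + c * a s * (w s) ^ 2)
    - ∫ s in Set.Ioo (0:ℝ) 1, c * a s * f s * w s


noncomputable def Gfun (M x : ℝ) : ℝ :=
  if x < -M then Real.exp (x + M) - (M + 1) else if x ≤ M then x else M + 1 - Real.exp (M - x)

noncomputable def Gder (M x : ℝ) : ℝ :=
  if x < -M then Real.exp (x + M) else if x ≤ M then 1 else Real.exp (M - x)

lemma Gfun_eq_mid {M x : ℝ} (h1 : -M ≤ x) (h2 : x ≤ M) : Gfun M x = x := by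
  simp [Gfun, not_lt.2 h1, h2]

lemma Gfun_eq_left {M x : ℝ} (hM : 0 < M) (h : x ≤ -M) : Gfun M x = Real.exp (x + M) - (M + 1) := by
  rcases lt_or_eq_of_le h with h' | h'
  · simp [Gfun, h']
  · rw [h', Gfun_eq_mid le_rfl (by linarith), neg_add_cancel, Real.exp_zero]; ring

lemma Gfun_eq_right {M x : ℝ} (hM : 0 < M) (h : M ≤ x) : Gfun M x = M + 1 - Real.exp (M - x) := by
  rcases lt_or_eq_of_le h with h' | h'
  · have hn : ¬ x < -M := by linarith
    simp [Gfun, hn, not_le.2 h']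
  · subst h'
    have hn : ¬ M < -M := by linarith
    simp only [Gfun]
    rw [if_neg hn, if_pos le_rfl, sub_self, Real.exp_zero]; ring

lemma Gfun_hasDerivAt {M : ℝ} (hM : 0 < M) (x : ℝ) : HasDerivAt (Gfun M) (Gder M x) x := by
  have hL : ∀ y : ℝ, HasDerivAt (fun z => Real.exp (z + M) - (M + 1)) (Real.exp (y + M)) y := by
    intro y
    simpa using (((hasDerivAt_id y).add_const M).exp.sub_const (M + 1))
  have hR : ∀ y : ℝ, HasDerivAt (fun z => M + 1 - Real.exp (M - z)) (Real.exp (M - y)) y := by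
    intro y
    have h1 : HasDerivAt (fun z : ℝ => M - z) (-1) y := by
      exact (hasDerivAt_id' y).const_sub M
    have := (h1.exp).const_sub (M + 1)
    simpa using this
  rcases lt_trichotomy x (-M) with hx | hx | hx
  · have hGd : Gder M x = Real.exp (x + M) := by simp [Gder, hx]
    rw [hGd]
    refine (hL x).congr_of_eventuallyEq ?_
    filter_upwards [Iio_mem_nhds hx] with y hy
    exact Gfun_eq_left hM (le_of_lt hy)
  · rw [hx]
    have hGd : Gder M (-M) = 1 := by
      simp only [Gder]
      rw [if_neg (lt_irrefl _), if_pos (by linarith)]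
    rw [hGd]
    have h1 : HasDerivWithinAt (Gfun M) 1 (Set.Iic (-M)) (-M) := by
      have := (hL (-M)).hasDerivWithinAt (s := Set.Iic (-M))
      simp only [neg_add_cancel, Real.exp_zero] at this
      exact this.congr (fun y hy => Gfun_eq_left hM hy) (Gfun_eq_left hM le_rfl)
    have h2 : HasDerivWithinAt (Gfun M) 1 (Set.Icc (-M) M) (-M) := by
      exact (hasDerivWithinAt_id (-M) (Set.Icc (-M) M)).congr
        (fun y hy => Gfun_eq_mid hy.1 hy.2) (Gfun_eq_mid le_rfl (by linarith))
    have h3 := h1.union h2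
    rw [Set.Iic_union_Icc_eq_Iic (by linarith : -M ≤ M)] at h3
    exact h3.hasDerivAt (Iic_mem_nhds (by linarith))
  · rcases lt_trichotomy x M with hx2 | hx2 | hx2
    · have hGd : Gder M x = 1 := by simp [Gder, not_lt.2 hx.le, hx2.le]
      rw [hGd]
      refine (hasDerivAt_id x).congr_of_eventuallyEq ?_
      filter_upwards [Ioo_mem_nhds hx hx2] with y hy
      exact Gfun_eq_mid hy.1.le hy.2.le
    · rw [hx2]
      have hGd : Gder M M = 1 := by
        simp only [Gder]
        rw [if_neg (by linarith), if_pos le_rfl]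
      rw [hGd]
      have h1 : HasDerivWithinAt (Gfun M) 1 (Set.Icc (-M) M) M := by
        exact (hasDerivWithinAt_id M (Set.Icc (-M) M)).congr
          (fun y hy => Gfun_eq_mid hy.1 hy.2) (Gfun_eq_mid (by linarith) le_rfl)
      have h2 : HasDerivWithinAt (Gfun M) 1 (Set.Ici M) M := by
        have := (hR M).hasDerivWithinAt (s := Set.Ici M)
        simp only [sub_self, Real.exp_zero] at this
        exact this.congr (fun y hy => Gfun_eq_right hM hy) (Gfun_eq_right hM le_rfl)
      have h3 := h1.union h2
      rw [Set.Icc_union_Ici_eq_Ici (by linarith : -M ≤ M)] at h3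
      exact h3.hasDerivAt (Ici_mem_nhds (by linarith))
    · have hGd : Gder M x = Real.exp (M - x) := by
        have h1 : ¬ x < -M := by linarith
        simp [Gder, h1, not_le.2 hx2]
      rw [hGd]
      refine (hR x).congr_of_eventuallyEq ?_
      filter_upwards [Ioi_mem_nhds hx2] with y hy
      exact Gfun_eq_right hM (le_of_lt hy)

lemma Gfun_continuous {M : ℝ} (hM : 0 < M) : Continuous (Gfun M) :=
  continuous_iff_continuousAt.2 fun x => (Gfun_hasDerivAt hM x).differentiableAt.continuousAt

lemma Gfun_zero {M : ℝ} (hM : 0 < M) : Gfun M 0 = 0 :=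
  Gfun_eq_mid (by linarith) hM.le

lemma Gder_nonneg (M x : ℝ) : 0 ≤ Gder M x := by
  unfold Gder; split_ifs <;> positivity

lemma Gder_le_one {M : ℝ} (hM : 0 < M) (x : ℝ) : Gder M x ≤ 1 := by
  unfold Gder
  split_ifs with h1 h2
  · exact Real.exp_le_one_iff.2 (by linarith)
  · exact le_rfl
  · exact Real.exp_le_one_iff.2 (by push_neg at h2; linarith)

lemma Gfun_right {M x : ℝ} (hM : 0 < M) (h : M < x) :
    M ≤ Gfun M x ∧ Gfun M x < x := by
  rw [Gfun_eq_right hM h.le]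
  constructor
  · have : Real.exp (M - x) ≤ 1 := Real.exp_le_one_iff.2 (by linarith)
    linarith
  · have := Real.add_one_lt_exp (x := M - x) (by intro h'; nlinarith)
    linarith

lemma Gfun_left {M x : ℝ} (hM : 0 < M) (h : x < -M) :
    x < Gfun M x ∧ Gfun M x ≤ -M := by
  rw [Gfun_eq_left hM h.le]
  constructor
  · have := Real.add_one_lt_exp (x := x + M) (by intro h'; nlinarith)
    linarith
  · have : Real.exp (x + M) ≤ 1 := Real.exp_le_one_iff.2 (by linarith)
    linarith

lemma Gfun_sq_le {M : ℝ} (hM : 0 < M) (x : ℝ) : (Gfun M x) ^ 2 ≤ x ^ 2 := by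
  rcases lt_trichotomy x (-M) with h | h | h
  · have := Gfun_left hM h; nlinarith [this.1, this.2]
  · rw [h, Gfun_eq_left hM le_rfl]
    have : Real.exp (-M + M) = 1 := by rw [neg_add_cancel, Real.exp_zero]
    rw [this]; nlinarith
  · rcases le_or_gt x M with h2 | h2
    · rw [Gfun_eq_mid h.le h2]
    · have := Gfun_right hM h2; nlinarith [this.1, this.2]

lemma Gfun_sq_lt {M x : ℝ} (hM : 0 < M) (h : M < |x|) : (Gfun M x) ^ 2 < x ^ 2 := by
  rcases lt_abs.mp h with h1 | h1
  · have := Gfun_right hM h1; nlinarith [this.1, this.2]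
  · have h2 : x < -M := by linarith
    have := Gfun_left hM h2; nlinarith [this.1, this.2]

lemma Gfun_ne_zero {M x : ℝ} (hM : 0 < M) (h : x ≠ 0) : Gfun M x ≠ 0 := by
  rcases lt_trichotomy x (-M) with h1 | h1 | h1
  · have := Gfun_left hM h1; intro h'; rw [h'] at this; linarith [this.2]
  · rw [h1, Gfun_eq_left hM le_rfl]
    have : Real.exp (-M + M) = 1 := by rw [neg_add_cancel, Real.exp_zero]
    rw [this]; intro h'; linarith
  · rcases le_or_gt x M with h2 | h2
    · rw [Gfun_eq_mid h1.le h2]; exact h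
    · have := Gfun_right hM h2; intro h'; rw [h'] at this; linarith [this.1]

lemma Gfun_key_nonneg {M F f₀ x : ℝ} (hM : 0 < M) (hFM : F < M) (hf : |f₀| ≤ F) :
    0 ≤ (x ^ 2 - (Gfun M x) ^ 2) / 2 - f₀ * (x - Gfun M x) := by
  have hf1 : -F ≤ f₀ := (abs_le.mp hf).1
  have hf2 : f₀ ≤ F := (abs_le.mp hf).2
  rcases lt_trichotomy x (-M) with h | h | h
  · have := Gfun_left hM h; nlinarith [this.1, this.2]
  · rw [h, Gfun_eq_left hM le_rfl]
    have : Real.exp (-M + M) = 1 := by rw [neg_add_cancel, Real.exp_zero]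
    rw [this]; nlinarith
  · rcases le_or_gt x M with h2 | h2
    · rw [Gfun_eq_mid h.le h2]; ring_nf; exact le_rfl
    · have := Gfun_right hM h2; nlinarith [this.1, this.2]

lemma Gfun_key_pos {M F f₀ x : ℝ} (hM : 0 < M) (hFM : F < M) (hf : |f₀| ≤ F)
    (hx : M < |x|) : 0 < (x ^ 2 - (Gfun M x) ^ 2) / 2 - f₀ * (x - Gfun M x) := by
  have hf1 : -F ≤ f₀ := (abs_le.mp hf).1
  have hf2 : f₀ ≤ F := (abs_le.mp hf).2
  rcases lt_abs.mp hx with h1 | h1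
  · have := Gfun_right hM h1; nlinarith [this.1, this.2]
  · have h2 : x < -M := by linarith
    have := Gfun_left hM h2; nlinarith [this.1, this.2]

lemma Gder_measurable (M : ℝ) : Measurable (Gder M) := by
  unfold Gder
  refine Measurable.ite (measurableSet_lt measurable_id measurable_const) (by fun_prop) ?_
  exact Measurable.ite (measurableSet_le measurable_id measurable_const)
    measurable_const (by fun_prop)

lemma abs_Gfun_le {M : ℝ} (hM : 0 < M) (x : ℝ) : |Gfun M x| ≤ |x| := by
  have h := Gfun_sq_le hM x
  rw [← Real.sqrt_sq_eq_abs, ← Real.sqrt_sq_eq_abs]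
  exact Real.sqrt_le_sqrt h

noncomputable def qfun1 (M x : ℝ) : ℝ := if x = 0 then 1 else x / Gfun M x
noncomputable def qfun2 (M x : ℝ) : ℝ := if x = 0 then 1 else Gfun M x / x

lemma qfun1_measurable {M : ℝ} (hM : 0 < M) : Measurable (qfun1 M) := by
  unfold qfun1
  refine Measurable.ite ?_ measurable_const (measurable_id.div (Gfun_continuous hM).measurable)
  simp only [Set.setOf_eq_eq_singleton]
  exact measurableSet_singleton 0

lemma qfun2_measurable {M : ℝ} (hM : 0 < M) : Measurable (qfun2 M) := by
  unfold qfun2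
  refine Measurable.ite ?_ measurable_const ((Gfun_continuous hM).measurable.div measurable_id)
  simp only [Set.setOf_eq_eq_singleton]
  exact measurableSet_singleton 0

lemma key_lemma (a f v v' : ℝ → ℝ) (c F M : ℝ) (hc : 0 < c)
    (ha : ContinuousOn a (Set.Icc 0 1))
    (hapos : ∀ s ∈ Set.Ico (0:ℝ) 1, 0 < a s)
    (hF : ∀ s ∈ Set.Ioo (0:ℝ) 1, |f s| ≤ F)
    (hv : MemHa a v v')
    (hmin : ∀ w w' : ℝ → ℝ, MemHa a w w' → energyE a c f v v' ≤ energyE a c f w w')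
    (hFM : F < M) :
    ∀ᵐ s ∂(volume.restrict (Set.Ioo (0:ℝ) 1)), |v s| ≤ M := by
  have hF0 : 0 ≤ F := le_trans (abs_nonneg _) (hF (1/2) (by norm_num))
  have hM : 0 < M := lt_of_le_of_lt hF0 hFM
  obtain ⟨hvc, hvd, hvL2, hv'L2, hv0⟩ := hv
  set I : Set ℝ := Set.Ioo (0:ℝ) 1 with hI
  set μ : Measure ℝ := volume.restrict I with hμ
  have hIm : MeasurableSet I := measurableSet_Ioo
  -- measurability
  have hmv : AEStronglyMeasurable v μ :=
    (hvc.mono Set.Ioo_subset_Ico_self).aestronglyMeasurable hIm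
  have hma : AEStronglyMeasurable a μ :=
    (ha.mono Set.Ioo_subset_Icc_self).aestronglyMeasurable hIm
  have hv'eq : ∀ᵐ s ∂μ, v' s = deriv v s := by
    rw [hμ, ae_restrict_iff' hIm]
    filter_upwards with s hs
    exact ((hvd s hs).deriv).symm
  have hmv' : AEStronglyMeasurable v' μ :=
    (measurable_deriv v).aestronglyMeasurable.congr
      (by filter_upwards [hv'eq] with s h; exact h.symm)
  -- bound on a
  obtain ⟨K, hK⟩ := isCompact_Icc.exists_bound_of_continuousOn ha
  -- basic integrability
  have hμfin : μ Set.univ < ⊤ := by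
    rw [hμ, Measure.restrict_apply_univ, hI, Real.volume_Ioo]
    exact ENNReal.ofReal_lt_top
  have hInt_v : Integrable v μ := by
    refine Integrable.mono' ((integrable_const (1:ℝ)).add hvL2) hmv ?_
    filter_upwards with s
    rw [Real.norm_eq_abs, Pi.add_apply]
    nlinarith [sq_nonneg (|v s| - 1), sq_abs (v s)]
  have hIntQ1 : Integrable (fun s => c * a s * v s ^ 2) μ := by
    have hm : AEStronglyMeasurable (fun s => c * a s * v s ^ 2) μ := by
      have h2 : AEStronglyMeasurable (fun s => v s ^ 2) μ := by
        simpa [pow_two, Pi.mul_def] using hmv.mul hmv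
      exact (aestronglyMeasurable_const.mul hma).mul h2
    refine Integrable.mono' (hvL2.const_mul (c * K)) hm ?_
    rw [hμ, ae_restrict_iff' hIm]
    filter_upwards with s hs
    have haK : |a s| ≤ K := by
      have := hK s (Set.Ioo_subset_Icc_self hs)
      rwa [Real.norm_eq_abs] at this
    have h0 : 0 ≤ |a s| := abs_nonneg _
    rw [Real.norm_eq_abs]
    calc |c * a s * v s ^ 2| = c * |a s| * v s ^ 2 := by
          rw [abs_mul, abs_mul, abs_of_nonneg hc.le, abs_of_nonneg (sq_nonneg (v s))]
      _ ≤ c * K * v s ^ 2 :=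
          mul_le_mul_of_nonneg_right (mul_le_mul_of_nonneg_left haK hc.le) (sq_nonneg _)
  -- the competitor
  set w : ℝ → ℝ := fun s => Gfun M (v s) with hw
  set w' : ℝ → ℝ := fun s => Gder M (v s) * v' s with hw'
  have hmw : AEStronglyMeasurable w μ :=
    (Gfun_continuous hM).comp_aestronglyMeasurable hmv
  have hmgd : AEStronglyMeasurable (fun s => Gder M (v s)) μ :=
    ((Gder_measurable M).comp_aemeasurable hmv.aemeasurable).aestronglyMeasurable
  have hIntw2 : Integrable (fun s => w s ^ 2) μ := by
    refine Integrable.mono' hvL2 (by simpa [pow_two, Pi.mul_def] using hmw.mul hmw) ?_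
    filter_upwards with s
    rw [Real.norm_eq_abs, abs_of_nonneg (sq_nonneg _)]
    exact Gfun_sq_le hM (v s)
  have hIntP2 : Integrable (fun s => (a s ^ 2 * w' s) ^ 2) μ := by
    have hm : AEStronglyMeasurable (fun s => (a s ^ 2 * w' s) ^ 2) μ := by
      have h1 : AEStronglyMeasurable (fun s => a s ^ 2 * w' s) μ := by
        have ha2 : AEStronglyMeasurable (fun s => a s ^ 2) μ := by
          simpa [pow_two, Pi.mul_def] using hma.mul hma
        exact ha2.mul (hmgd.mul hmv')
      simpa [pow_two, Pi.mul_def] using h1.mul h1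
    refine Integrable.mono' hv'L2 hm ?_
    filter_upwards with s
    rw [Real.norm_eq_abs, abs_of_nonneg (sq_nonneg _)]
    have h1 := Gder_nonneg M (v s)
    have h2 := Gder_le_one hM (v s)
    have hg2 : Gder M (v s) ^ 2 ≤ 1 := by nlinarith
    calc (a s ^ 2 * w' s) ^ 2 = Gder M (v s) ^ 2 * (a s ^ 2 * v' s) ^ 2 := by
          rw [hw']; ring
      _ ≤ 1 * (a s ^ 2 * v' s) ^ 2 := mul_le_mul_of_nonneg_right hg2 (sq_nonneg _)
      _ = (a s ^ 2 * v' s) ^ 2 := one_mul _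
  have hwmem : MemHa a w w' := by
    refine ⟨(Gfun_continuous hM).comp_continuousOn hvc, ?_, hIntw2, hIntP2, ?_⟩
    · intro s hs
      exact (Gfun_hasDerivAt hM (v s)).comp s (hvd s hs)
    · show Gfun M (v 0) = 0
      rw [hv0, Gfun_zero hM]
  -- remaining integrability
  have hIntP1 : Integrable (fun s => a s ^ 4 * v' s ^ 2) μ := by
    have : (fun s => a s ^ 4 * v' s ^ 2) = fun s => (a s ^ 2 * v' s) ^ 2 := by
      funext s; ring
    rw [this]; exact hv'L2
  have hIntP2' : Integrable (fun s => a s ^ 4 * w' s ^ 2) μ := by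
    have : (fun s => a s ^ 4 * w' s ^ 2) = fun s => (a s ^ 2 * w' s) ^ 2 := by
      funext s; ring
    rw [this]; exact hIntP2
  have hIntQ2 : Integrable (fun s => c * a s * w s ^ 2) μ := by
    have hm : AEStronglyMeasurable (fun s => c * a s * w s ^ 2) μ := by
      have h2 : AEStronglyMeasurable (fun s => w s ^ 2) μ := by
        simpa [pow_two, Pi.mul_def] using hmw.mul hmw
      exact (aestronglyMeasurable_const.mul hma).mul h2
    refine Integrable.mono' hIntQ1 hm ?_
    rw [hμ, ae_restrict_iff' hIm]
    filter_upwards with s hs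
    have hap : 0 < a s := hapos s (Set.Ioo_subset_Ico_self hs)
    have hgs := Gfun_sq_le hM (v s)
    rw [Real.norm_eq_abs, abs_of_nonneg (by positivity : (0:ℝ) ≤ c * a s * w s ^ 2)]
    show c * a s * Gfun M (v s) ^ 2 ≤ c * a s * v s ^ 2
    exact mul_le_mul_of_nonneg_left hgs (by positivity)
  -- energy inequality
  have hIconst : ∀ C : ℝ, (∫ _ in I, C ∂volume) = C := by
    intro C
    rw [setIntegral_const, hI, Real.volume_real_Ioo]
    simp
  have hCint : ∀ C : ℝ, Integrable (fun _ => C) μ := by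
    intro C
    rw [hμ]
    exact integrableOn_const (by rw [hI, Real.volume_Ioo]; exact ENNReal.ofReal_ne_top)
  set C1 : ℝ := ∫ s in I, c * a s * f s * v s ∂volume with hC1
  set C2 : ℝ := ∫ s in I, c * a s * f s * w s ∂volume with hC2
  have hs1 : ∫ s in I, (a s ^ 4 * v' s ^ 2 + c * a s * v s ^ 2 - C1) ∂volume
      = (∫ s in I, a s ^ 4 * v' s ^ 2 ∂volume) + (∫ s in I, c * a s * v s ^ 2 ∂volume) - C1 := by
    have h1 : ∫ s in I, (a s ^ 4 * v' s ^ 2 + c * a s * v s ^ 2 - C1) ∂volume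
        = (∫ s in I, (a s ^ 4 * v' s ^ 2 + c * a s * v s ^ 2) ∂volume) - ∫ _ in I, C1 ∂volume :=
      integral_sub (hIntP1.add hIntQ1) (hCint C1)
    have h2 : (∫ s in I, (a s ^ 4 * v' s ^ 2 + c * a s * v s ^ 2) ∂volume)
        = (∫ s in I, a s ^ 4 * v' s ^ 2 ∂volume) + ∫ s in I, c * a s * v s ^ 2 ∂volume :=
      integral_add hIntP1 hIntQ1
    rw [h1, h2, hIconst]
  have hs2 : ∫ s in I, (a s ^ 4 * w' s ^ 2 + c * a s * w s ^ 2 - C2) ∂volume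
      = (∫ s in I, a s ^ 4 * w' s ^ 2 ∂volume) + (∫ s in I, c * a s * w s ^ 2 ∂volume) - C2 := by
    have h1 : ∫ s in I, (a s ^ 4 * w' s ^ 2 + c * a s * w s ^ 2 - C2) ∂volume
        = (∫ s in I, (a s ^ 4 * w' s ^ 2 + c * a s * w s ^ 2) ∂volume) - ∫ _ in I, C2 ∂volume :=
      integral_sub (hIntP2'.add hIntQ2) (hCint C2)
    have h2 : (∫ s in I, (a s ^ 4 * w' s ^ 2 + c * a s * w s ^ 2) ∂volume)
        = (∫ s in I, a s ^ 4 * w' s ^ 2 ∂volume) + ∫ s in I, c * a s * w s ^ 2 ∂volume :=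
      integral_add hIntP2' hIntQ2
    rw [h1, h2, hIconst]
  have hE := hmin w w' hwmem
  unfold energyE at hE
  rw [← hI] at hE
  have hE2 : (1/2) * ((∫ s in I, a s ^ 4 * v' s ^ 2 ∂volume)
        + (∫ s in I, c * a s * v s ^ 2 ∂volume) - C1)
      ≤ (1/2) * ((∫ s in I, a s ^ 4 * w' s ^ 2 ∂volume)
        + (∫ s in I, c * a s * w s ^ 2 ∂volume) - C2) := by
    rw [← hs1, ← hs2]
    exact hE
  have hP : (∫ s in I, a s ^ 4 * w' s ^ 2 ∂volume) ≤ ∫ s in I, a s ^ 4 * v' s ^ 2 ∂volume := by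
    refine integral_mono hIntP2' hIntP1 ?_
    intro s
    have h1 := Gder_nonneg M (v s)
    have h2 := Gder_le_one hM (v s)
    have hg2 : Gder M (v s) ^ 2 ≤ 1 := by nlinarith
    show a s ^ 4 * w' s ^ 2 ≤ a s ^ 4 * v' s ^ 2
    calc a s ^ 4 * w' s ^ 2 = Gder M (v s) ^ 2 * (a s ^ 2 * v' s) ^ 2 := by
          simp only [hw']; ring
      _ ≤ 1 * (a s ^ 2 * v' s) ^ 2 := mul_le_mul_of_nonneg_right hg2 (sq_nonneg _)
      _ = a s ^ 4 * v' s ^ 2 := by ring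
  have hQR : (∫ s in I, c * a s * v s ^ 2 ∂volume) - (∫ s in I, c * a s * w s ^ 2 ∂volume)
      ≤ C1 - C2 := by linarith
  -- relating integrability of R1 and R2
  have habsG : ∀ x, |Gfun M x| ≤ |x| := abs_Gfun_le hM
  have hR12 : Integrable (fun s => c * a s * f s * v s) μ
      → Integrable (fun s => c * a s * f s * w s) μ := by
    intro h1
    have heq : (fun s => c * a s * f s * w s)
        = fun s => (c * a s * f s * v s) * qfun2 M (v s) := by
      funext s
      by_cases hvs : v s = 0
      · simp [hw, hvs, Gfun_zero hM, qfun2]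
      · simp only [hw, qfun2, if_neg hvs]
        field_simp
    have hm : AEStronglyMeasurable (fun s => c * a s * f s * w s) μ := by
      rw [heq]
      exact h1.aestronglyMeasurable.mul
        (((qfun2_measurable hM).comp_aemeasurable hmv.aemeasurable).aestronglyMeasurable)
    refine Integrable.mono' h1.abs hm ?_
    filter_upwards with s
    rw [Real.norm_eq_abs]
    show |c * a s * f s * Gfun M (v s)| ≤ |c * a s * f s * v s|
    calc |c * a s * f s * Gfun M (v s)| = |c * a s * f s| * |Gfun M (v s)| := abs_mul _ _
      _ ≤ |c * a s * f s| * |v s| := mul_le_mul_of_nonneg_left (habsG (v s)) (abs_nonneg _)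
      _ = |c * a s * f s * v s| := (abs_mul _ _).symm
  have hR21 : Integrable (fun s => c * a s * f s * w s) μ
      → Integrable (fun s => c * a s * f s * v s) μ := by
    intro h2
    have heq : (fun s => c * a s * f s * v s)
        = fun s => (c * a s * f s * w s) * qfun1 M (v s) := by
      funext s
      by_cases hvs : v s = 0
      · simp [hw, hvs, Gfun_zero hM, qfun1]
      · simp only [hw, qfun1, if_neg hvs]
        have hG : Gfun M (v s) ≠ 0 := Gfun_ne_zero hM hvs
        field_simp
    have hm : AEStronglyMeasurable (fun s => c * a s * f s * v s) μ := by
      rw [heq]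
      exact h2.aestronglyMeasurable.mul
        (((qfun1_measurable hM).comp_aemeasurable hmv.aemeasurable).aestronglyMeasurable)
    refine Integrable.mono' (hInt_v.abs.const_mul (c * K * F)) hm ?_
    rw [hμ, ae_restrict_iff' hIm]
    filter_upwards with s hs
    have haK : |a s| ≤ K := by
      have := hK s (Set.Ioo_subset_Icc_self hs)
      rwa [Real.norm_eq_abs] at this
    have hfs := hF s hs
    rw [Real.norm_eq_abs]
    have h0a := abs_nonneg (a s)
    have h0f := abs_nonneg (f s)
    have h0v := abs_nonneg (v s)
    have hK0 : (0:ℝ) ≤ K := le_trans h0a haK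
    calc |c * a s * f s * v s| = c * |a s| * |f s| * |v s| := by
          rw [abs_mul, abs_mul, abs_mul, abs_of_nonneg hc.le]
      _ = c * (|a s| * |f s|) * |v s| := by ring
      _ ≤ c * (K * F) * |v s| := by
          refine mul_le_mul_of_nonneg_right (mul_le_mul_of_nonneg_left ?_ hc.le) h0v
          exact mul_le_mul haK hfs h0f hK0
      _ = c * K * F * |v s| := by ring
  -- case split on integrability of the f-term
  by_cases hR1i : Integrable (fun s => c * a s * f s * v s) μ
  · -- integrable case
    have hR2i : Integrable (fun s => c * a s * f s * w s) μ := hR12 hR1i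
    set ψ : ℝ → ℝ := fun s => (c * a s * v s ^ 2 - c * a s * w s ^ 2)
      - (c * a s * f s * v s - c * a s * f s * w s) with hψ
    have hψi : Integrable ψ μ := (hIntQ1.sub hIntQ2).sub (hR1i.sub hR2i)
    have hψle : ∫ s in I, ψ s ∂volume ≤ 0 := by
      have e1 : ∫ s in I, ((c * a s * v s ^ 2 - c * a s * w s ^ 2)
            - (c * a s * f s * v s - c * a s * f s * w s)) ∂volume
          = (∫ s in I, (c * a s * v s ^ 2 - c * a s * w s ^ 2) ∂volume)
            - ∫ s in I, (c * a s * f s * v s - c * a s * f s * w s) ∂volume :=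
        integral_sub (hIntQ1.sub hIntQ2) (hR1i.sub hR2i)
      have e2 : ∫ s in I, (c * a s * v s ^ 2 - c * a s * w s ^ 2) ∂volume
          = (∫ s in I, c * a s * v s ^ 2 ∂volume) - ∫ s in I, c * a s * w s ^ 2 ∂volume :=
        integral_sub hIntQ1 hIntQ2
      have e3 : ∫ s in I, (c * a s * f s * v s - c * a s * f s * w s) ∂volume
          = C1 - C2 :=
        integral_sub hR1i hR2i
      simp only [hψ]
      rw [e1, e2, e3]
      linarith
    have hψnn : ∀ᵐ s ∂μ, 0 ≤ ψ s := by
      rw [hμ, ae_restrict_iff' hIm]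
      filter_upwards with s hs
      have hap : 0 < a s := hapos s (Set.Ioo_subset_Ico_self hs)
      have hfs := hF s hs
      have hkey := Gfun_key_nonneg hM hFM hfs (x := v s)
      have hsq := Gfun_sq_le hM (v s)
      have hX : 0 ≤ (v s ^ 2 - Gfun M (v s) ^ 2) - f s * (v s - Gfun M (v s)) := by linarith
      have : ψ s = c * a s * ((v s ^ 2 - Gfun M (v s) ^ 2) - f s * (v s - Gfun M (v s))) := by
        simp only [hψ, hw]; ring
      rw [this]
      exact mul_nonneg (by positivity) hX
    have hψ0 : ψ =ᵐ[μ] 0 := by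
      refine (integral_eq_zero_iff_of_nonneg_ae hψnn hψi).mp ?_
      exact le_antisymm hψle (integral_nonneg_of_ae hψnn)
    have hψ0' : ∀ᵐ s ∂μ, ψ s = 0 := hψ0
    rw [hμ, ae_restrict_iff' hIm] at hψ0' ⊢
    filter_upwards [hψ0'] with s h0 hs
    by_contra hlt
    push_neg at hlt
    have hap : 0 < a s := hapos s (Set.Ioo_subset_Ico_self hs)
    have hfs := hF s hs
    have hkey := Gfun_key_pos hM hFM hfs hlt
    have hsq := Gfun_sq_le hM (v s)
    have hX : 0 < (v s ^ 2 - Gfun M (v s) ^ 2) - f s * (v s - Gfun M (v s)) := by linarith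
    have hψs : ψ s = c * a s * ((v s ^ 2 - Gfun M (v s) ^ 2) - f s * (v s - Gfun M (v s))) := by
      simp only [hψ, hw]; ring
    have : 0 < ψ s := by
      rw [hψs]
      exact mul_pos (by positivity) hX
    rw [h0 hs] at this
    exact lt_irrefl 0 this
  · -- non-integrable case
    have hR2i : ¬ Integrable (fun s => c * a s * f s * w s) μ := fun h => hR1i (hR21 h)
    rw [hμ] at hR1i hR2i
    have hC10 : C1 = 0 := by rw [hC1]; exact integral_undef hR1i
    have hC20 : C2 = 0 := by rw [hC2]; exact integral_undef hR2i
    set φ : ℝ → ℝ := fun s => c * a s * v s ^ 2 - c * a s * w s ^ 2 with hφ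
    have hφi : Integrable φ μ := hIntQ1.sub hIntQ2
    have hφle : ∫ s in I, φ s ∂volume ≤ 0 := by
      have e2 : ∫ s in I, (c * a s * v s ^ 2 - c * a s * w s ^ 2) ∂volume
          = (∫ s in I, c * a s * v s ^ 2 ∂volume) - ∫ s in I, c * a s * w s ^ 2 ∂volume :=
        integral_sub hIntQ1 hIntQ2
      simp only [hφ]
      rw [e2]
      rw [hC10, hC20] at hQR
      linarith
    have hφnn : ∀ᵐ s ∂μ, 0 ≤ φ s := by
      rw [hμ, ae_restrict_iff' hIm]
      filter_upwards with s hs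
      have hap : 0 < a s := hapos s (Set.Ioo_subset_Ico_self hs)
      have hgs := Gfun_sq_le hM (v s)
      have : φ s = c * a s * (v s ^ 2 - Gfun M (v s) ^ 2) := by
        simp only [hφ, hw]; ring
      rw [this]
      exact mul_nonneg (by positivity) (by linarith)
    have hφ0 : φ =ᵐ[μ] 0 := by
      refine (integral_eq_zero_iff_of_nonneg_ae hφnn hφi).mp ?_
      exact le_antisymm hφle (integral_nonneg_of_ae hφnn)
    have hφ0' : ∀ᵐ s ∂μ, φ s = 0 := hφ0
    rw [hμ, ae_restrict_iff' hIm] at hφ0' ⊢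
    filter_upwards [hφ0'] with s h0 hs
    by_contra hlt
    push_neg at hlt
    have hap : 0 < a s := hapos s (Set.Ioo_subset_Ico_self hs)
    have hgs := Gfun_sq_lt hM hlt (x := v s)
    have hφs : φ s = c * a s * (v s ^ 2 - Gfun M (v s) ^ 2) := by
      simp only [hφ, hw]; ring
    have : 0 < φ s := by
      rw [hφs]
      exact mul_pos (by positivity) (by linarith)
    rw [h0 hs] at this
    exact lt_irrefl 0 this

/-- Maximum principle: the energy minimizer `v` of `(a⁴v')' - αv = αf`, `v(0)=0`,
with `α = c·a`, satisfies `|v| ≤ 2‖f‖_∞` a.e. on `(0,1)`. -/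
theorem stmt_4 (a f v v' : ℝ → ℝ) (c F : ℝ) (hc : 0 < c)
    (ha : ContinuousOn a (Set.Icc 0 1))
    (hanneg : ∀ s ∈ Set.Icc (0:ℝ) 1, 0 ≤ a s)
    (hapos : ∀ s ∈ Set.Ico (0:ℝ) 1, 0 < a s)
    (hF : ∀ s ∈ Set.Ioo (0:ℝ) 1, |f s| ≤ F)
    (hv : MemHa a v v')
    (hmin : ∀ w w' : ℝ → ℝ, MemHa a w w' → energyE a c f v v' ≤ energyE a c f w w') :
    ∀ᵐ s ∂(volume.restrict (Set.Ioo (0:ℝ) 1)), |v s| ≤ 2 * F := by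
  have h := fun (M : ℝ) (hFM : F < M) =>
    key_lemma a f v v' c F M hc ha hapos hF hv hmin hFM
  rcases lt_or_eq_of_le (le_trans (abs_nonneg _) (hF (1/2) (by norm_num)) : (0:ℝ) ≤ F)
    with hF0 | hF0
  · exact h (2 * F) (by linarith)
  · have hall : ∀ᵐ s ∂(volume.restrict (Set.Ioo (0:ℝ) 1)),
        ∀ n : ℕ, |v s| ≤ 1 / ((n : ℝ) + 1) := by
      rw [MeasureTheory.ae_all_iff]
      intro n
      exact h (1 / ((n : ℝ) + 1)) (by rw [← hF0]; positivity)
    filter_upwards [hall] with s hs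
    have hv0 : |v s| ≤ 0 := by
      by_contra hpos
      push_neg at hpos
      obtain ⟨n, hn⟩ := exists_nat_one_div_lt hpos
      linarith [hs n]
    rw [← hF0]
    simpa using hv0
end

section
/- Let X : [0,1] → ℝ³ be a unit-speed C² curve with curvature bound κ⋆ and bi-Lipschitz constant c_Γ := inf_{s₁≠s₂} |X(s₁)−X(s₂)|/|s₁−s₂| > 0. Let R_ε = s̄ e_t(s) + εa(s) e_r + s̄² Q(s, s̄) with e_t(s) ⊥ e_r, |e_t| = |e_r| = 1, |Q| ≤ κ⋆/2, a(s) ∈ [0,1], ε > 0. Then | |R_ε| − √(s̄² + ε²a(s)²) | ≤ (κ⋆/2) s̄², and for ε sufficiently small (depending only on κ⋆, c_Γ) one has |R_ε| ≥ c √(s̄² + ε²a(s)²) with c depending only on κ⋆ and c_Γ. -/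
open Real RealInnerProductSpace

/-- Quadratic fencing lemma: if `‖g' u‖ ≤ K (u - a)` on `[a,b]`, then
`‖g b - g a‖ ≤ (K/2)(b-a)²`. -/
lemma lemA {E : Type*} [NormedAddCommGroup E] [NormedSpace ℝ E] {g g' : ℝ → E} {a b K : ℝ}
    (hab : a ≤ b)
    (hg : ∀ u ∈ Set.Icc a b, HasDerivWithinAt g (g' u) (Set.Icc a b) u)
    (hbd : ∀ u ∈ Set.Icc a b, ‖g' u‖ ≤ K * (u - a)) :
    ‖g b - g a‖ ≤ K / 2 * (b - a) ^ 2 := by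
  have hf : ContinuousOn (fun u => g u - g a) (Set.Icc a b) :=
    ContinuousOn.sub (fun u hu => (hg u hu).continuousWithinAt) continuousOn_const
  have hf' : ∀ x ∈ Set.Ico a b,
      HasDerivWithinAt (fun u => g u - g a) (g' x) (Set.Ici x) x := by
    intro x hx
    have := ((hg x (Set.Ico_subset_Icc_self hx)).sub_const (g a))
    exact this.mono_of_mem_nhdsWithin (Icc_mem_nhdsGE_of_mem hx)
  have hB : ∀ x : ℝ, HasDerivAt (fun u => K / 2 * (u - a) ^ 2) (K * (x - a)) x := by
    intro x
    have h1 : HasDerivAt (fun u : ℝ => (u - a) ^ 2) (2 * (x - a) ^ 1 * 1) x :=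
      (((hasDerivAt_id x).sub_const a)).pow 2
    have := h1.const_mul (K / 2)
    exact this.congr_deriv (by ring)
  have key := image_norm_le_of_norm_deriv_right_le_deriv_boundary hf hf'
    (B := fun u => K / 2 * (u - a) ^ 2) (B' := fun u => K * (u - a))
    (by simp) hB (fun x hx => hbd x (Set.Ico_subset_Icc_self hx))
    (Set.right_mem_Icc.2 hab)
  simpa using key

/-- Second-order Taylor estimate with base point `s` (anchored at the derivative at `s`). -/
lemma lemB {E : Type*} [NormedAddCommGroup E] [NormedSpace ℝ E]
    {f f' f'' : ℝ → E} {K s t : ℝ}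
    (hf : ∀ u ∈ Set.Icc (0:ℝ) 1, HasDerivWithinAt f (f' u) (Set.Icc 0 1) u)
    (hf' : ∀ u ∈ Set.Icc (0:ℝ) 1, HasDerivWithinAt f' (f'' u) (Set.Icc 0 1) u)
    (hK : ∀ u ∈ Set.Icc (0:ℝ) 1, ‖f'' u‖ ≤ K)
    (hs : s ∈ Set.Icc (0:ℝ) 1) (ht : t ∈ Set.Icc (0:ℝ) 1) :
    ‖f s - f t - (s - t) • f' s‖ ≤ K / 2 * (s - t) ^ 2 := by
  -- Lipschitz bound on f'
  have hlip : ∀ u ∈ Set.Icc (0:ℝ) 1, ‖f' u - f' s‖ ≤ K * |u - s| := by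
    intro u hu
    have := Convex.norm_image_sub_le_of_norm_hasDerivWithin_le hf' hK
      (convex_Icc 0 1) hs hu
    simpa [Real.norm_eq_abs] using this
  -- the auxiliary function g
  set g : ℝ → E := fun u => f u - u • f' s with hgdef
  have hg : ∀ u ∈ Set.Icc (0:ℝ) 1, HasDerivWithinAt g (f' u - f' s) (Set.Icc 0 1) u := by
    intro u hu
    have h2 : HasDerivWithinAt (fun u : ℝ => u • f' s) ((1:ℝ) • f' s) (Set.Icc 0 1) u :=
      ((hasDerivAt_id u).smul_const (f' s)).hasDerivWithinAt
    have h3 := (hf u hu).sub h2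
    rw [one_smul] at h3
    exact h3
  have hgoal : ‖g s - g t‖ = ‖f s - f t - (s - t) • f' s‖ := by
    congr 1
    simp only [hgdef, sub_smul]
    abel
  rcases le_total s t with hst | hst
  · -- s ≤ t : apply lemA on [s, t]
    have hsub : Set.Icc s t ⊆ Set.Icc (0:ℝ) 1 := Set.Icc_subset_Icc hs.1 ht.2
    have h := lemA (g := g) (g' := fun u => f' u - f' s) hst
      (fun u hu => (hg u (hsub hu)).mono hsub)
      (fun u hu => by
        have := hlip u (hsub hu)
        rwa [abs_of_nonneg (by linarith [hu.1])] at this)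
    rw [← hgoal]
    calc ‖g s - g t‖ = ‖g t - g s‖ := by rw [← norm_neg]; congr 1; abel
      _ ≤ K / 2 * (t - s) ^ 2 := h
      _ = K / 2 * (s - t) ^ 2 := by ring
  · -- t ≤ s : apply lemA to the reversed function on [t, s]
    have hsub : Set.Icc t s ⊆ Set.Icc (0:ℝ) 1 := Set.Icc_subset_Icc ht.1 hs.2
    have hmaps : Set.MapsTo (fun u => s + t - u) (Set.Icc t s) (Set.Icc t s) := by
      intro u hu
      simp only [Set.mem_Icc] at hu ⊢
      constructor <;> linarith [hu.1, hu.2]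
    have hh : ∀ u ∈ Set.Icc t s,
        HasDerivWithinAt (fun u => g (s + t - u))
          ((-1 : ℝ) • (f' (s + t - u) - f' s)) (Set.Icc t s) u := by
      intro u hu
      have hφ : HasDerivWithinAt (fun u : ℝ => s + t - u) (-1) (Set.Icc t s) u := by
        have h3 := ((hasDerivWithinAt_const u (Set.Icc t s) (s + t)).sub
          (hasDerivWithinAt_id u (Set.Icc t s)))
        rw [zero_sub] at h3
        exact h3
      have hgu : HasDerivWithinAt g (f' (s + t - u) - f' s) (Set.Icc t s)
          ((fun u => s + t - u) u) := (hg (s + t - u) (hsub (hmaps hu))).mono hsub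
      exact hgu.scomp u hφ hmaps
    have h := lemA (g := fun u => g (s + t - u))
      (g' := fun u => (-1 : ℝ) • (f' (s + t - u) - f' s)) hst hh
      (fun u hu => by
        have h1 := hlip (s + t - u) (hsub (hmaps hu))
        have h2 : |s + t - u - s| = u - t := by
          rw [abs_of_nonpos (by linarith [hu.1])]; ring
        rw [h2] at h1
        show ‖(-1 : ℝ) • (f' (s + t - u) - f' s)‖ ≤ K * (u - t)
        rw [neg_one_smul, norm_neg]
        exact h1)
    have he : (fun u => g (s + t - u)) s - (fun u => g (s + t - u)) t = g t - g s := by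
      simp
    rw [he] at h
    rw [← hgoal]
    calc ‖g s - g t‖ = ‖g t - g s‖ := by rw [← norm_neg]; congr 1; abel
      _ ≤ K / 2 * (s - t) ^ 2 := h

set_option maxHeartbeats 800000 in
/-- Basic geometric estimate for `R_ε = X(s) - X(t) + εa e_r` along a unit-speed `C²` curve
with curvature bound `κ⋆` and bi-Lipschitz constant `c_Γ`: writing `s̄ = s - t`,
`||R_ε| - √(s̄² + ε²a²)| ≤ (κ⋆/2)s̄²`, and for `ε` small (depending only on `κ⋆, c_Γ`)
`|R_ε| ≥ c√(s̄² + ε²a²)` with `c = c(κ⋆, c_Γ) > 0`. -/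
theorem stmt_14 (κs cΓ : ℝ) (hκs : 0 ≤ κs) (hcΓ : 0 < cΓ) :
    ∃ ε₀ > 0, ∃ c > 0,
      ∀ (X X' X'' : ℝ → EuclideanSpace ℝ (Fin 3)) (er : EuclideanSpace ℝ (Fin 3))
        (a ε s t : ℝ),
        (∀ u ∈ Set.Icc (0:ℝ) 1, HasDerivWithinAt X (X' u) (Set.Icc 0 1) u) →
        (∀ u ∈ Set.Icc (0:ℝ) 1, HasDerivWithinAt X' (X'' u) (Set.Icc 0 1) u) →
        (∀ u ∈ Set.Icc (0:ℝ) 1, ‖X' u‖ = 1) →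
        (∀ u ∈ Set.Icc (0:ℝ) 1, ‖X'' u‖ ≤ κs) →
        (∀ s₁ ∈ Set.Icc (0:ℝ) 1, ∀ s₂ ∈ Set.Icc (0:ℝ) 1,
          cΓ * |s₁ - s₂| ≤ ‖X s₁ - X s₂‖) →
        ‖er‖ = 1 → ⟪er, X' s⟫ = (0:ℝ) →
        s ∈ Set.Icc (0:ℝ) 1 → t ∈ Set.Icc (0:ℝ) 1 →
        0 < ε → a ∈ Set.Icc (0:ℝ) 1 →
        (|‖X s - X t + (ε * a) • er‖ - Real.sqrt ((s - t) ^ 2 + ε ^ 2 * a ^ 2)|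
            ≤ κs / 2 * (s - t) ^ 2) ∧
        (ε < ε₀ →
          c * Real.sqrt ((s - t) ^ 2 + ε ^ 2 * a ^ 2) ≤ ‖X s - X t + (ε * a) • er‖) := by
  refine ⟨min (cΓ / (2 * (κs + 1))) (1 / (κs + 1)), by positivity,
    min (1/2) (cΓ / 4), by positivity, ?_⟩
  intro X X' X'' er a ε s t hX hX' hunit hcurv hbilip her horth hsmem htmem hε ha
  set S := Real.sqrt ((s - t) ^ 2 + ε ^ 2 * a ^ 2) with hSdef
  have hS0 : 0 ≤ S := Real.sqrt_nonneg _
  have hSabs : |s - t| ≤ S := by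
    rw [hSdef, ← Real.sqrt_sq_eq_abs]
    exact Real.sqrt_le_sqrt (by nlinarith [sq_nonneg (ε * a)])
  -- the orthogonal principal part
  set P : EuclideanSpace ℝ (Fin 3) := (s - t) • X' s + (ε * a) • er with hPdef
  have hPnorm : ‖P‖ = S := by
    have hinner : (inner ℝ ((s - t) • X' s) ((ε * a) • er) : ℝ) = 0 := by
      rw [real_inner_smul_left, real_inner_smul_right, real_inner_comm, horth]
      ring
    have hsq : ‖P‖ ^ 2 = (s - t) ^ 2 + ε ^ 2 * a ^ 2 := by
      rw [hPdef, norm_add_sq_real, hinner, norm_smul, norm_smul,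
        hunit s hsmem, her, Real.norm_eq_abs, Real.norm_eq_abs]
      rw [mul_pow, mul_pow, sq_abs, sq_abs]
      ring
    rw [hSdef, ← hsq, Real.sqrt_sq (norm_nonneg _)]
  -- Taylor estimate
  have htaylor : ‖X s - X t - (s - t) • X' s‖ ≤ κs / 2 * (s - t) ^ 2 :=
    lemB hX hX' hcurv hsmem htmem
  have hdiff : X s - X t + (ε * a) • er - P = X s - X t - (s - t) • X' s := by
    rw [hPdef]; abel
  have hpart1 : |‖X s - X t + (ε * a) • er‖ - S| ≤ κs / 2 * (s - t) ^ 2 := by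
    calc |‖X s - X t + (ε * a) • er‖ - S|
        = |‖X s - X t + (ε * a) • er‖ - ‖P‖| := by rw [hPnorm]
      _ ≤ ‖X s - X t + (ε * a) • er - P‖ := abs_norm_sub_norm_le _ _
      _ = ‖X s - X t - (s - t) • X' s‖ := by rw [hdiff]
      _ ≤ κs / 2 * (s - t) ^ 2 := htaylor
  refine ⟨hpart1, ?_⟩
  intro hεsmall
  have hεlt1 : ε < cΓ / (2 * (κs + 1)) := lt_of_lt_of_le hεsmall (min_le_left _ _)
  have hεlt2 : ε < 1 / (κs + 1) := lt_of_lt_of_le hεsmall (min_le_right _ _)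
  have hR1 : S - κs / 2 * (s - t) ^ 2 ≤ ‖X s - X t + (ε * a) • er‖ := by
    have := abs_le.1 hpart1
    linarith [this.1]
  rcases le_or_gt (κs * (s - t) ^ 2) S with hcase | hcase
  · -- small gap case
    have hc : min (1/2 : ℝ) (cΓ / 4) ≤ 1/2 := min_le_left _ _
    have : min (1/2 : ℝ) (cΓ / 4) * S ≤ 1/2 * S := by
      apply mul_le_mul_of_nonneg_right hc hS0
    linarith
  · -- large gap case: |s - t| is bounded below
    have habs_pos : 0 < |s - t| := by
      by_contra h
      push_neg at h
      have : |s - t| = 0 := le_antisymm h (abs_nonneg _)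
      have hst0 : (s - t) ^ 2 = 0 := by
        rw [← sq_abs, this]; ring
      rw [hst0] at hcase
      simp at hcase
      linarith
    have hκsbig : 1 < κs * |s - t| := by
      have h1 : |s - t| < κs * |s - t| ^ 2 := by
        rw [sq_abs]; linarith [hSabs]
      nlinarith
    have hlower : 1 / (κs + 1) < |s - t| := by
      rw [div_lt_iff₀ (by positivity)]
      nlinarith [abs_nonneg (s - t)]
    have hεltabs : ε < |s - t| := lt_trans hεlt2 hlower
    have hεacΓ : ε * a ≤ cΓ * |s - t| / 2 := by
      have h1 : ε * a ≤ ε := mul_le_of_le_one_right hε.le ha.2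
      have h2 : cΓ / (2 * (κs + 1)) ≤ cΓ * |s - t| / 2 := by
        have h3 : cΓ / (2 * (κs + 1)) = cΓ / 2 * (1 / (κs + 1)) := by
          field_simp
        have h4 : cΓ / 2 * (1 / (κs + 1)) ≤ cΓ / 2 * |s - t| :=
          mul_le_mul_of_nonneg_left hlower.le (by positivity)
        rw [h3]
        linarith
      linarith
    have hbilow : cΓ * |s - t| ≤ ‖X s - X t‖ := hbilip s hsmem t htmem
    have hRlow : cΓ * |s - t| / 2 ≤ ‖X s - X t + (ε * a) • er‖ := by
      have h1 : ‖X s - X t‖ ≤ ‖X s - X t + (ε * a) • er‖ + ‖(ε * a) • er‖ := by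
        have := norm_add_le (X s - X t + (ε * a) • er) (-((ε * a) • er))
        simpa using this
      have h2 : ‖(ε * a) • er‖ = ε * a := by
        rw [norm_smul, her, Real.norm_eq_abs,
          abs_of_nonneg (mul_nonneg hε.le ha.1), mul_one]
      rw [h2] at h1
      linarith
    have hSup : S ≤ 2 * |s - t| := by
      rw [hSdef]
      have h4 : (s - t) ^ 2 + ε ^ 2 * a ^ 2 ≤ (2 * |s - t|) ^ 2 := by
        have hεsq : ε ^ 2 ≤ (s - t) ^ 2 := by
          rw [← sq_abs (s - t)]
          nlinarith [hε.le]
        have ha2 : ε ^ 2 * a ^ 2 ≤ ε ^ 2 :=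
          mul_le_of_le_one_right (sq_nonneg ε) (by nlinarith [ha.1, ha.2])
        have h5 : (2 * |s - t|) ^ 2 = 4 * (s - t) ^ 2 := by
          rw [mul_pow, sq_abs]; norm_num
        rw [h5]
        nlinarith [sq_nonneg (s - t)]
      calc Real.sqrt ((s - t) ^ 2 + ε ^ 2 * a ^ 2)
          ≤ Real.sqrt ((2 * |s - t|) ^ 2) := Real.sqrt_le_sqrt h4
        _ = 2 * |s - t| := Real.sqrt_sq (by positivity)
    have hc : min (1/2 : ℝ) (cΓ / 4) ≤ cΓ / 4 := min_le_right _ _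
    calc min (1/2 : ℝ) (cΓ / 4) * S ≤ cΓ / 4 * S := mul_le_mul_of_nonneg_right hc hS0
      _ ≤ cΓ / 4 * (2 * |s - t|) := by nlinarith [hcΓ.le]
      _ = cΓ * |s - t| / 2 := by ring
      _ ≤ ‖X s - X t + (ε * a) • er‖ := hRlow
end
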